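/- Let T_{2,k} be the balanced binary tree with k levels (2^k − 1 vertices). For every k ≥ 2, the minimum cardinalities of propagating sets satisfy the recursion π(T_{2,k}) = 2·π(T_{2,k-1}) + 1 if k is odd, and π(T_{2,k}) = 2·π(T_{2,k-1}) − 1 if k is even; equivalently π(T_{2,k}) = 2·π(T_{2,k-1}) + (−1)^{k-1}. -/

import Mathlib

/-- The propagation closure: `PropReach G S v` means vertex `v` eventually receives the
information when the process starts from the set `S` on the graph `G`.  A vertex `w` can be
added whenever some vertex `v` already having the information is adjacent to `w` and every
neighbour of `v` other than `w` already has the information. -/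
inductive PropReach {V : Type*} (G : SimpleGraph V) (S : Set V) : V → Prop
  | base {v : V} (hv : v ∈ S) : PropReach G S v
  | step {v w : V} (hv : PropReach G S v) (hadj : G.Adj v w)
      (hall : ∀ x : V, G.Adj v x → x ≠ w → PropReach G S x) : PropReach G S w

/-- `S ↷ G` : the set `S` propagates to (all of) the graph `G`. -/
def Propagates {V : Type*} (G : SimpleGraph V) (S : Set V) : Prop :=
  ∀ v : V, PropReach G S v

/-- `π(G)`: the minimum cardinality of a set of vertices propagating to `G`. -/
noncomputable def propNum {V : Type*} (G : SimpleGraph V) : ℕ :=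
  sInf {n : ℕ | ∃ S : Set V, S.ncard = n ∧ Propagates G S}

/-- The balanced `m`-ary tree of depth `d`: vertices are words over an alphabet of
size `m` of length at most `d` (the root is the empty word), and each vertex `l` of
length `< d` is adjacent to its `m` children `x :: l`. -/
def BalancedTree (m d : ℕ) : SimpleGraph {l : List (Fin m) // l.length ≤ d} where
  Adj a b := (∃ x : Fin m, (a : List (Fin m)) = x :: (b : List (Fin m))) ∨
             (∃ x : Fin m, (b : List (Fin m)) = x :: (a : List (Fin m)))
  symm := ⟨fun a b h => h.symm⟩
  loopless := by
    constructor
    rintro a (⟨x, hx⟩ | ⟨x, hx⟩) <;> simpa using congrArg List.length hx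

section Stages

variable {α : Type*} (G : SimpleGraph α) (S : Set α)

/-- The monotone propagation process by stages. -/
def stg : ℕ → Set α
  | 0 => S
  | n+1 => stg n ∪ {w | ∃ u ∈ stg n, G.Adj u w ∧ ∀ x, G.Adj u x → x ≠ w → x ∈ stg n}

variable {G S}

lemma stg_mono : ∀ {m n : ℕ}, m ≤ n → stg G S m ⊆ stg G S n := by
  intro m n h
  induction n with
  | zero => simp_all
  | succ n ih =>
    rcases Nat.lt_or_ge m (n+1) with h' | h'
    · exact (ih (by omega)).trans (by intro x hx; exact Or.inl hx)
    · have : m = n + 1 := by omega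
      subst this; exact fun x hx => hx

lemma stg_subset_reach : ∀ {n : ℕ} {v : α}, v ∈ stg G S n → PropReach G S v := by
  intro n
  induction n with
  | zero => exact fun {v} hv => PropReach.base hv
  | succ n ih =>
    rintro v (hv | ⟨u, hu, hadj, hall⟩)
    · exact ih hv
    · exact PropReach.step (ih hu) hadj (fun x hx hne => ih (hall x hx hne))

lemma reach_exists_stg [Finite α] {v : α} (h : PropReach G S v) : ∃ n, v ∈ stg G S n := by
  induction h with
  | base hv => exact ⟨0, hv⟩
  | @step v w hv hadj hall ihv ihall =>
    classical
    obtain ⟨n₀, hn₀⟩ := ihv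
    choose f hf using fun (x : α) (hx : G.Adj v x) (hne : x ≠ w) => ihall x hx hne
    have hfin : {x | G.Adj v x}.Finite := Set.toFinite _
    set F := hfin.toFinset with hF
    set N := max n₀ (F.sup (fun x => if h : G.Adj v x ∧ x ≠ w then f x h.1 h.2 else 0)) with hN
    refine ⟨N + 1, Or.inr ⟨v, stg_mono (le_max_left _ _) hn₀, hadj, ?_⟩⟩
    intro x hx hne
    have hxF : x ∈ F := by simp [hF, hfin, hx]
    have h2 := Finset.le_sup (f := fun x => if h : G.Adj v x ∧ x ≠ w then f x h.1 h.2 else 0) hxF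
    simp only [dif_pos (⟨hx, hne⟩ : G.Adj v x ∧ x ≠ w)] at h2
    exact stg_mono (le_trans h2 (le_max_right _ _)) (hf x hx hne)

lemma stg_entry : ∀ {n : ℕ} {v : α}, v ∈ stg G S n → v ∈ S ∨
    ∃ m, m < n ∧ ∃ u ∈ stg G S m, G.Adj u v ∧ ∀ x, G.Adj u x → x ≠ v → x ∈ stg G S m := by
  intro n
  induction n with
  | zero => exact fun hv => Or.inl hv
  | succ n ih =>
    rintro v (hv | ⟨u, hu, hadj, hall⟩)
    · rcases ih hv with h | ⟨m, hm, h⟩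
      · exact Or.inl h
      · exact Or.inr ⟨m, by omega, h⟩
    · exact Or.inr ⟨n, by omega, u, hu, hadj, hall⟩

/-- Master induction principle over stages. -/
lemma stg_rec {Q : α → Prop} (h0 : ∀ a ∈ S, Q a)
    (hstep : ∀ n u a, u ∈ stg G S n → G.Adj u a →
      (∀ x, G.Adj u x → x ≠ a → x ∈ stg G S n) →
      (∀ b, b ∈ stg G S n → Q b) → Q a) :
    ∀ n a, a ∈ stg G S n → Q a := by
  intro n
  induction n with
  | zero => exact fun a ha => h0 a ha
  | succ n ih =>
    rintro a (ha | ⟨u, hu, hadj, hall⟩)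
    · exact ih a ha
    · exact hstep n u a hu hadj hall ih

lemma reach_empty {v : α} (h : PropReach G (∅ : Set α) v) : False := by
  induction h with
  | base hv => exact hv
  | step hv hadj hall ihv ihall => exact ihv

end Stages

section Structure

/-- Vertices of the balanced binary tree of depth `d`. -/
abbrev Vd (d : ℕ) := {l : List (Fin 2) // l.length ≤ d}

instance (d : ℕ) : Finite (Vd d) := Set.Finite.to_subtype (List.finite_length_le _ d)

instance (d : ℕ) : Finite (Option (Vd d)) :=
  Finite.of_equiv _ (Equiv.optionEquivSumPUnit.{0, 0} (Vd d)).symm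

abbrev Td (d : ℕ) : SimpleGraph (Vd d) := BalancedTree 2 d

/-- The root. -/
def rt (d : ℕ) : Vd d := ⟨[], by simp⟩

/-- The embedding of the depth-`d` tree as the subtree of the child `[x]`:
vertices ending in `x`. -/
def emb {d : ℕ} (x : Fin 2) (l : Vd d) : Vd (d+1) :=
  ⟨(l : List (Fin 2)) ++ [x], by have := l.2; simp; omega⟩

lemma emb_coe {d : ℕ} (x : Fin 2) (l : Vd d) : (emb x l : List (Fin 2)) = (l : List (Fin 2)) ++ [x] := rfl

lemma emb_inj {d : ℕ} (x : Fin 2) : Function.Injective (emb (d := d) x) := by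
  intro a b h
  have : (a : List (Fin 2)) ++ [x] = (b : List (Fin 2)) ++ [x] := congrArg Subtype.val h
  exact Subtype.ext (by simpa using this)

lemma emb_ne_rt {d : ℕ} (x : Fin 2) (l : Vd d) : emb x l ≠ rt (d+1) := by
  intro h
  have : (l : List (Fin 2)) ++ [x] = [] := congrArg Subtype.val h
  simp at this

lemma emb_ne_emb {d : ℕ} {x y : Fin 2} (h : x ≠ y) (l l' : Vd d) : emb x l ≠ emb y l' := by
  intro he
  have : (l : List (Fin 2)) ++ [x] = (l' : List (Fin 2)) ++ [y] := congrArg Subtype.val he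
  have := List.getLast_congr (by simp) (by simp) this
  simp at this; exact h this

/-- every non-root vertex is in the image of one of the embeddings. -/
lemma vertex_cases {d : ℕ} (v : Vd (d+1)) : v = rt (d+1) ∨ ∃ x l, v = emb x l := by
  rcases v with ⟨l, hl⟩
  rcases List.eq_nil_or_concat l with rfl | ⟨l', x, rfl⟩
  · exact Or.inl rfl
  · exact Or.inr ⟨x, ⟨l', by simp at hl; omega⟩, Subtype.ext (by simp [emb_coe])⟩

lemma adj_emb_emb {d : ℕ} (x : Fin 2) (l l' : Vd d) :
    (Td (d+1)).Adj (emb x l) (emb x l') ↔ (Td d).Adj l l' := by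
  simp only [BalancedTree, emb_coe]
  constructor
  · rintro (⟨y, hy⟩ | ⟨y, hy⟩)
    · left
      refine ⟨y, ?_⟩
      have h2 : (l:List (Fin 2)) ++ [x] = (y :: (l':List (Fin 2))) ++ [x] := by simpa using hy
      exact (List.append_left_inj _).mp h2
    · right
      refine ⟨y, ?_⟩
      have h2 : (l':List (Fin 2)) ++ [x] = (y :: (l:List (Fin 2))) ++ [x] := by simpa using hy
      exact (List.append_left_inj _).mp h2
  · rintro (⟨y, hy⟩ | ⟨y, hy⟩)
    · left; exact ⟨y, by rw [hy]; simp⟩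
    · right; exact ⟨y, by rw [hy]; simp⟩

lemma adj_rt_emb {d : ℕ} (x : Fin 2) (l : Vd d) :
    (Td (d+1)).Adj (rt (d+1)) (emb x l) ↔ l = rt d := by
  simp only [BalancedTree, emb_coe, rt]
  constructor
  · rintro (⟨y, hy⟩ | ⟨y, hy⟩)
    · exact absurd (congrArg List.length hy) (by simp)
    · rcases l with ⟨l, hl⟩
      rcases List.eq_nil_or_concat l with rfl | ⟨l', z, rfl⟩
      · rfl
      · exfalso
        simp only [Subtype.mk.injEq] at hy ⊢
        have := congrArg List.length hy
        simp at this
  · rintro rfl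
    right; exact ⟨x, rfl⟩

/-- classification of neighbours of an embedded vertex. -/
lemma adj_emb_cases {d : ℕ} (x : Fin 2) (l : Vd d) (w : Vd (d+1))
    (h : (Td (d+1)).Adj (emb x l) w) :
    (l = rt d ∧ w = rt (d+1)) ∨ ∃ l', w = emb x l' ∧ (Td d).Adj l l' := by
  rcases h with ⟨y, hy⟩ | ⟨y, hy⟩
  · -- (emb x l) = y :: w : w is the parent of emb x l
    rcases l with ⟨l, hl⟩
    rcases l with _ | ⟨z, l''⟩
    · left
      simp only [emb_coe, List.nil_append] at hy
      rcases w with ⟨w, hw⟩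
      simp only [List.cons.injEq] at hy
      exact ⟨rfl, Subtype.ext hy.2.symm⟩
    · right
      simp only [emb_coe, List.cons_append] at hy
      simp only [List.cons.injEq] at hy
      have hw : (w : List (Fin 2)) = l'' ++ [x] := hy.2.symm
      have hl'' : l''.length ≤ d := by simp at hl; omega
      refine ⟨⟨l'', hl''⟩, Subtype.ext (by simpa [emb_coe] using hw), ?_⟩
      left; exact ⟨z, by simp [hy.1]⟩
  · -- w = y :: (emb x l) : w is a child of emb x l
    right
    have hw : (w : List (Fin 2)) = (y :: (l : List (Fin 2))) ++ [x] := by simpa [emb_coe] using hy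
    have hlen : (y :: (l : List (Fin 2))).length ≤ d := by
      have := w.2; rw [hw] at this; simp at this; simpa using this
    refine ⟨⟨y :: (l : List (Fin 2)), hlen⟩, Subtype.ext (by simpa [emb_coe] using hw), ?_⟩
    right; exact ⟨y, rfl⟩

/-- classification of neighbours of the root. -/
lemma adj_rt_cases {d : ℕ} (w : Vd (d+1)) (h : (Td (d+1)).Adj (rt (d+1)) w) :
    ∃ x : Fin 2, w = emb x (rt d) := by
  rcases vertex_cases w with rfl | ⟨x, l, rfl⟩
  · exact absurd h (SimpleGraph.irrefl _)
  · exact ⟨x, by rw [(adj_rt_emb x l).1 h]⟩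

lemma adj_rt_vd {d : ℕ} (w : Vd d) (h : (Td d).Adj (rt d) w) :
    ∃ z : Fin 2, (w : List (Fin 2)) = [z] := by
  rcases h with ⟨y, hy⟩ | ⟨y, hy⟩
  · exact absurd (congrArg List.length hy) (by simp [rt])
  · exact ⟨y, by simpa [rt] using hy⟩

end Structure

section PendGraph

/-- The balanced binary tree of depth `d` with an extra pendant vertex (`none`)
attached to the root. -/
def Pd (d : ℕ) : SimpleGraph (Option (Vd d)) where
  Adj u v := (u = none ∧ v = some (rt d)) ∨ (v = none ∧ u = some (rt d)) ∨
    (∃ a b, u = some a ∧ v = some b ∧ (Td d).Adj a b)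
  symm := by
    constructor
    rintro u v (⟨h1, h2⟩ | ⟨h1, h2⟩ | ⟨a, b, h1, h2, h3⟩)
    · exact Or.inr (Or.inl ⟨h1, h2⟩)
    · exact Or.inl ⟨h1, h2⟩
    · exact Or.inr (Or.inr ⟨b, a, h2, h1, h3.symm⟩)
  loopless := by
    constructor
    rintro u (⟨h1, h2⟩ | ⟨h1, h2⟩ | ⟨a, b, h1, h2, h3⟩)
    · rw [h1] at h2; exact nomatch h2
    · rw [h1] at h2; exact nomatch h2
    · rw [h1] at h2; injection h2 with h2; rw [← h2] at h3; exact (Td d).irrefl h3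

lemma pd_adj_none {d : ℕ} (v : Option (Vd d)) :
    (Pd d).Adj none v ↔ v = some (rt d) := by
  constructor
  · rintro (⟨h1, h2⟩ | ⟨h1, h2⟩ | ⟨a, b, h1, h2, h3⟩)
    · exact h2
    · exact absurd h2 (fun hc => nomatch hc)
    · exact absurd h1 (fun hc => nomatch hc)
  · rintro rfl; exact Or.inl ⟨rfl, rfl⟩

lemma pd_adj_some {d : ℕ} (a b : Vd d) :
    (Pd d).Adj (some a) (some b) ↔ (Td d).Adj a b := by
  constructor
  · rintro (⟨h1, h2⟩ | ⟨h1, h2⟩ | ⟨a', b', h1, h2, h3⟩)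
    · exact absurd h1 (fun hc => nomatch hc)
    · exact absurd h1 (fun hc => nomatch hc)
    · injection h1 with h1; injection h2 with h2; rw [← h1, ← h2] at h3; exact h3
  · intro h; exact Or.inr (Or.inr ⟨a, b, rfl, rfl, h⟩)

lemma pd_adj_some_none {d : ℕ} (a : Vd d) :
    (Pd d).Adj (some a) none ↔ a = rt d := by
  rw [(Pd d).adj_comm, pd_adj_none]
  exact ⟨fun h => by injection h, fun h => by rw [h]⟩

/-- classification of neighbours in `Pd`. -/
lemma pd_adj_cases {d : ℕ} (u v : Option (Vd d)) (h : (Pd d).Adj u v) :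
    (u = none ∧ v = some (rt d)) ∨ (v = none ∧ u = some (rt d)) ∨
    (∃ a b, u = some a ∧ v = some b ∧ (Td d).Adj a b) := h

end PendGraph

section Quantities

/-- minimum size of a propagating set. -/
noncomputable def aN (d : ℕ) : ℕ := propNum (Td d)

/-- minimum size of a set propagating to the tree-with-pendant (pendant initially empty). -/
noncomputable def bN (d : ℕ) : ℕ :=
  sInf {n : ℕ | ∃ S : Set (Vd d), S.ncard = n ∧ Propagates (Pd d) (some '' S)}

/-- minimum size of a set that, together with the pendant, propagates to the
tree-with-pendant. -/
noncomputable def cN (d : ℕ) : ℕ :=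
  sInf {n : ℕ | ∃ S : Set (Vd d), S.ncard = n ∧ Propagates (Pd d) (insert none (some '' S))}

/-- the target value sequence. -/
def AN : ℕ → ℕ
  | 0 => 1
  | d+1 => if Even (d+1) then 2 * AN d + 1 else 2 * AN d - 1

def BN (d : ℕ) : ℕ := if Even d then AN d else AN d + 1
def CN (d : ℕ) : ℕ := if Even d then AN d - 1 else AN d

lemma AN_pos (d : ℕ) : 1 ≤ AN d := by
  induction d with
  | zero => simp [AN]
  | succ d ih =>
    rw [AN]
    split <;> omega

end Quantities

section QuantityAPI

lemma prop_univ {α : Type*} (G : SimpleGraph α) : Propagates G Set.univ :=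
  fun v => PropReach.base (Set.mem_univ v)

lemma prop_pd_univ (d : ℕ) : Propagates (Pd d) (some '' Set.univ) := by
  intro v
  match v with
  | some a => exact PropReach.base ⟨a, Set.mem_univ a, rfl⟩
  | none =>
    refine PropReach.step (PropReach.base ⟨rt d, Set.mem_univ _, rfl⟩)
      ((pd_adj_some_none (rt d)).2 rfl) ?_
    intro x hx hne
    rcases pd_adj_cases _ _ hx with ⟨h1, h2⟩ | ⟨h1, h2⟩ | ⟨a, b, h1, h2, h3⟩
    · exact absurd h1 (fun hc => nomatch hc)
    · exact absurd h1 hne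
    · exact h2 ▸ PropReach.base ⟨b, Set.mem_univ b, rfl⟩

lemma aN_le {d : ℕ} {S : Set (Vd d)} (h : Propagates (Td d) S) : aN d ≤ S.ncard :=
  Nat.sInf_le ⟨S, rfl, h⟩

lemma bN_le {d : ℕ} {S : Set (Vd d)} (h : Propagates (Pd d) (some '' S)) : bN d ≤ S.ncard :=
  Nat.sInf_le ⟨S, rfl, h⟩

lemma cN_le {d : ℕ} {S : Set (Vd d)} (h : Propagates (Pd d) (insert none (some '' S))) :
    cN d ≤ S.ncard :=
  Nat.sInf_le ⟨S, rfl, h⟩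

lemma aN_spec (d : ℕ) : ∃ S : Set (Vd d), S.ncard = aN d ∧ Propagates (Td d) S := by
  have h : aN d ∈ {n : ℕ | ∃ S : Set (Vd d), S.ncard = n ∧ Propagates (Td d) S} :=
    Nat.sInf_mem ⟨(Set.univ : Set (Vd d)).ncard, Set.univ, rfl, prop_univ _⟩
  exact h

lemma bN_spec (d : ℕ) : ∃ S : Set (Vd d), S.ncard = bN d ∧ Propagates (Pd d) (some '' S) := by
  have h : bN d ∈ {n : ℕ | ∃ S : Set (Vd d), S.ncard = n ∧ Propagates (Pd d) (some '' S)} :=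
    Nat.sInf_mem ⟨(Set.univ : Set (Vd d)).ncard, Set.univ, rfl, prop_pd_univ d⟩
  exact h

lemma cN_spec (d : ℕ) : ∃ S : Set (Vd d), S.ncard = cN d ∧
    Propagates (Pd d) (insert none (some '' S)) := by
  have h : cN d ∈ {n : ℕ | ∃ S : Set (Vd d), S.ncard = n ∧
      Propagates (Pd d) (insert none (some '' S))} := by
    refine Nat.sInf_mem ⟨(Set.univ : Set (Vd d)).ncard, Set.univ, rfl, ?_⟩
    intro v
    match v with
    | some a => exact PropReach.base (Set.mem_insert_of_mem _ ⟨a, Set.mem_univ a, rfl⟩)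
    | none => exact PropReach.base (Set.mem_insert _ _)
  exact h

end QuantityAPI

section BaseCase

lemma vd0_eq (v : Vd 0) : v = rt 0 := by
  rcases v with ⟨l, hl⟩
  rcases l with _ | ⟨x, l⟩
  · rfl
  · simp at hl

lemma td0_no_adj (a b : Vd 0) : ¬ (Td 0).Adj a b := by
  rintro (⟨x, hx⟩ | ⟨x, hx⟩)
  · have := congrArg List.length hx
    have hb := b.2
    have ha := a.2
    simp at this ha hb; omega
  · have := congrArg List.length hx
    have hb := b.2
    have ha := a.2
    simp at this ha hb; omega

lemma ncard_zero_empty {α : Type*} [Finite α] {S : Set α} (h : S.ncard = 0) : S = ∅ :=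
  (Set.ncard_eq_zero (Set.toFinite S)).1 h

lemma aN_zero : aN 0 = 1 := by
  have h1 : aN 0 ≤ 1 := by
    have : Propagates (Td 0) {rt 0} := fun v => (vd0_eq v) ▸ PropReach.base rfl
    simpa using aN_le this
  have h0 : aN 0 ≠ 0 := by
    intro h
    obtain ⟨S, hS, hp⟩ := Nat.sInf_mem (⟨1, {rt 0}, by simp,
      fun v => (vd0_eq v) ▸ PropReach.base rfl⟩ : {n : ℕ | ∃ S : Set (Vd 0), S.ncard = n ∧
        Propagates (Td 0) S}.Nonempty)
    rw [show sInf {n : ℕ | ∃ S : Set (Vd 0), S.ncard = n ∧ Propagates (Td 0) S} = aN 0 from rfl,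
      h] at hS
    rw [ncard_zero_empty hS] at hp
    exact reach_empty (hp (rt 0))
  omega

lemma bN_zero : bN 0 = 1 := by
  have h1 : bN 0 ≤ 1 := by
    have : Propagates (Pd 0) (some '' {rt 0}) := by
      intro v
      match v with
      | some a => exact PropReach.base ⟨rt 0, rfl, by rw [vd0_eq a]⟩
      | none =>
        refine PropReach.step (PropReach.base ⟨rt 0, rfl, rfl⟩)
          ((pd_adj_some_none (rt 0)).2 rfl) ?_
        intro x hx hne
        rcases pd_adj_cases _ _ hx with ⟨h1, h2⟩ | ⟨h1, h2⟩ | ⟨a, b, h1, h2, h3⟩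
        · exact absurd h1 (fun hc => nomatch hc)
        · exact absurd h1 hne
        · injection h1 with h1; rw [← h1] at h3; exact absurd h3 (td0_no_adj _ _)
    simpa using bN_le this
  have h0 : bN 0 ≠ 0 := by
    intro h
    obtain ⟨S, hS, hp⟩ := Nat.sInf_mem (⟨1, {rt 0}, by simp, by
      intro v
      match v with
      | some a => exact PropReach.base ⟨rt 0, rfl, by rw [vd0_eq a]⟩
      | none =>
        refine PropReach.step (PropReach.base ⟨rt 0, rfl, rfl⟩)
          ((pd_adj_some_none (rt 0)).2 rfl) ?_
        intro x hx hne
        rcases pd_adj_cases _ _ hx with ⟨h1, h2⟩ | ⟨h1, h2⟩ | ⟨a, b, h1, h2, h3⟩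
        · exact absurd h1 (fun hc => nomatch hc)
        · exact absurd h1 hne
        · injection h1 with h1; rw [← h1] at h3; exact absurd h3 (td0_no_adj _ _)⟩ :
      {n : ℕ | ∃ S : Set (Vd 0), S.ncard = n ∧ Propagates (Pd 0) (some '' S)}.Nonempty)
    rw [show sInf {n : ℕ | ∃ S : Set (Vd 0), S.ncard = n ∧ Propagates (Pd 0) (some '' S)}
      = bN 0 from rfl, h] at hS
    rw [ncard_zero_empty hS] at hp
    have := hp none
    rw [Set.image_empty] at this
    exact reach_empty this
  omega

lemma cN_zero : cN 0 = 0 := by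
  apply Nat.eq_zero_of_le_zero
  have : Propagates (Pd 0) (insert none (some '' (∅ : Set (Vd 0)))) := by
    intro v
    match v with
    | none => exact PropReach.base (Set.mem_insert _ _)
    | some a =>
      rw [vd0_eq a]
      refine PropReach.step (PropReach.base (Set.mem_insert _ _))
        ((pd_adj_none (some (rt 0))).2 rfl) ?_
      intro x hx hne
      rw [pd_adj_none] at hx
      exact absurd hx hne
  simpa using cN_le this

end BaseCase

section Projections

/-- map for the `x`-side of the big tree, with the root playing the pendant. -/
def phiT {d : ℕ} (x : Fin 2) (a : Option (Vd d)) : Vd (d+1) :=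
  a.elim (rt (d+1)) (emb x)

lemma phiT_inj {d : ℕ} (x : Fin 2) : Function.Injective (phiT (d := d) x) := by
  rintro (_ | a) (_ | b) h
  · rfl
  · exact absurd h.symm (emb_ne_rt x b)
  · exact absurd h (emb_ne_rt x a)
  · exact congrArg some (emb_inj x h)

/-- (P1) c-type projection, unconditional : if `S` propagates to the big tree then its
`x`-part, helped by the pendant, propagates to the small pendant tree. -/
lemma cproj_T {d : ℕ} (S : Set (Vd (d+1))) (x : Fin 2) (h : Propagates (Td (d+1)) S) :
    Propagates (Pd d) (insert none (some '' (emb x ⁻¹' S))) := by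
  set T' : Set (Option (Vd d)) := insert none (some '' (emb x ⁻¹' S)) with hT'
  have main : ∀ n v, v ∈ stg (Td (d+1)) S n →
      ∀ a : Option (Vd d), v = phiT x a → PropReach (Pd d) T' a := by
    refine stg_rec ?_ ?_
    · rintro v hv (_ | l) rfl
      · exact PropReach.base (Set.mem_insert _ _)
      · exact PropReach.base (Set.mem_insert_of_mem _ ⟨l, hv, rfl⟩)
    · rintro n u v hu hadj hall oracle (_ | l) rfl
      · -- target is the root : pendant of the small graph, in the start set
        exact PropReach.base (Set.mem_insert _ _)
      · -- target is `emb x l`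
        rcases adj_emb_cases x l u hadj.symm with ⟨rfl, rfl⟩ | ⟨l', rfl, hadj'⟩
        · -- forcer is the root of the big tree; use the pendant as forcer
          refine PropReach.step (PropReach.base (Set.mem_insert _ _))
            ((pd_adj_none _).2 rfl) ?_
          intro z hz hne
          rw [pd_adj_none] at hz
          exact absurd hz hne
        · -- forcer is `emb x l'`
          have hreach : PropReach (Pd d) T' (some l') := oracle _ hu (some l') rfl
          refine PropReach.step hreach ((pd_adj_some l' l).2 hadj'.symm) ?_
          intro z hz hne
          rcases pd_adj_cases _ _ hz with ⟨h1, _⟩ | ⟨h1, h2⟩ | ⟨a', b, h1, h2, h3⟩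
          · exact absurd h1 (fun hc => nomatch hc)
          · exact h1 ▸ PropReach.base (Set.mem_insert _ _)
          · injection h1 with h1
            subst h2
            rw [← h1] at h3
            have hb : emb x b ∈ stg (Td (d+1)) S n := by
              refine hall _ ((adj_emb_emb x l' b).2 h3) ?_
              intro hc
              exact hne (by rw [emb_inj x hc])
            exact oracle _ hb (some b) rfl
  intro v
  match v with
  | none => exact PropReach.base (Set.mem_insert _ _)
  | some l =>
    obtain ⟨n, hn⟩ := reach_exists_stg (h (emb x l))
    exact main n _ hn (some l) rfl

end Projections

section Projections2

/-- classification of neighbours of an embedded vertex inside the big pendant tree. -/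
lemma pdadj_emb_cases {d : ℕ} (x : Fin 2) (l : Vd d) (u : Option (Vd (d+1)))
    (h : (Pd (d+1)).Adj u (some (emb x l))) :
    (l = rt d ∧ u = some (rt (d+1))) ∨
      ∃ l', u = some (emb x l') ∧ (Td d).Adj l l' := by
  rcases pd_adj_cases _ _ h with ⟨h1, h2⟩ | ⟨h1, h2⟩ | ⟨a, b, h1, h2, h3⟩
  · injection h2 with h2
    exact absurd h2 (emb_ne_rt x l)
  · exact absurd h1 (fun hc => nomatch hc)
  · injection h2 with h2
    subst h1
    rw [← h2] at h3
    rcases adj_emb_cases x l a h3.symm with ⟨hl, hu⟩ | ⟨l', hu, hadj'⟩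
    · exact Or.inl ⟨hl, by rw [hu]⟩
    · exact Or.inr ⟨l', by rw [hu], hadj'⟩

/-- classification of neighbours of the root inside the big pendant tree. -/
lemma pdadj_rt_cases {d : ℕ} (u : Option (Vd (d+1)))
    (h : (Pd (d+1)).Adj u (some (rt (d+1)))) :
    u = none ∨ ∃ y, u = some (emb y (rt d)) := by
  rcases pd_adj_cases _ _ h with ⟨h1, h2⟩ | ⟨h1, h2⟩ | ⟨a, b, h1, h2, h3⟩
  · exact Or.inl h1
  · exact absurd h1 (fun hc => nomatch hc)
  · injection h2 with h2
    subst h1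
    rw [← h2] at h3
    obtain ⟨y, hy⟩ := adj_rt_cases a h3.symm
    exact Or.inr ⟨y, by rw [hy]⟩

/-- (P2) b-type projection from the plain big tree. -/
lemma bproj_T {d : ℕ} {S : Set (Vd (d+1))} (x : Fin 2) (hr : rt (d+1) ∉ S)
    (m : ℕ) (hrm : rt (d+1) ∉ stg (Td (d+1)) S m)
    (hxm : emb x (rt d) ∈ stg (Td (d+1)) S m)
    (hallm : ∀ y, (Td (d+1)).Adj (emb x (rt d)) y → y ≠ rt (d+1) → y ∈ stg (Td (d+1)) S m)
    (h : Propagates (Td (d+1)) S) :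
    Propagates (Pd d) (some '' (emb x ⁻¹' S)) := by
  set T' : Set (Option (Vd d)) := some '' (emb x ⁻¹' S) with hT'
  -- once the `x`-root and its hall-condition are available, the pendant is reachable
  have key : ∀ n, m ≤ n → (∀ b, b ∈ stg (Td (d+1)) S n →
      ∀ a : Option (Vd d), b = phiT x a → PropReach (Pd d) T' a) →
      PropReach (Pd d) T' none := by
    intro n hmn oracle
    have hroot : PropReach (Pd d) T' (some (rt d)) :=
      oracle _ (stg_mono hmn hxm) (some (rt d)) rfl
    refine PropReach.step hroot ((pd_adj_some_none _).2 rfl) ?_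
    intro z hz hne
    rcases pd_adj_cases _ _ hz with ⟨h1, _⟩ | ⟨h1, h2⟩ | ⟨a', b, h1, h2, h3⟩
    · exact absurd h1 (fun hc => nomatch hc)
    · exact absurd h1 hne
    · injection h1 with h1
      subst h2
      rw [← h1] at h3
      have hb : emb x b ∈ stg (Td (d+1)) S m :=
        hallm _ ((adj_emb_emb x (rt d) b).2 h3) (emb_ne_rt x b)
      exact oracle _ (stg_mono hmn hb) (some b) rfl
  have main : ∀ n v, v ∈ stg (Td (d+1)) S n →
      ∀ a : Option (Vd d), v = phiT x a → PropReach (Pd d) T' a := by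
    refine stg_rec ?_ ?_
    · rintro v hv (_ | l) rfl
      · exact absurd hv hr
      · exact PropReach.base ⟨l, hv, rfl⟩
    · rintro n u v hu hadj hall oracle (_ | l) rfl
      · -- target is the root of the big tree, i.e. the small pendant
        have hev : rt (d+1) ∈ stg (Td (d+1)) S (n+1) := by
          rw [stg]
          exact Set.mem_union_right _ ⟨u, hu, hadj, hall⟩
        have hmn : m ≤ n := by
          by_contra hc
          push_neg at hc
          exact hrm (stg_mono (by omega) hev)
        exact key n hmn oracle
      · rcases adj_emb_cases x l u hadj.symm with ⟨rfl, rfl⟩ | ⟨l', rfl, hadj'⟩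
        · -- forcer is the big root; it must already have been reached, so `m ≤ n`
          have hmn : m ≤ n := by
            by_contra hc
            push_neg at hc
            exact hrm (stg_mono (by omega) hu)
          have hnone : PropReach (Pd d) T' none := key n hmn oracle
          refine PropReach.step hnone ((pd_adj_none _).2 rfl) ?_
          intro z hz hne
          rw [pd_adj_none] at hz
          exact absurd hz hne
        · have hreach : PropReach (Pd d) T' (some l') := oracle _ hu (some l') rfl
          refine PropReach.step hreach ((pd_adj_some l' l).2 hadj'.symm) ?_
          intro z hz hne
          rcases pd_adj_cases _ _ hz with ⟨h1, _⟩ | ⟨h1, h2⟩ | ⟨a', b, h1, h2, h3⟩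
          · exact absurd h1 (fun hc => nomatch hc)
          · -- z = none, so l' is the small root; the big root is a neighbour of emb x l',
            -- and target of the current step is `emb x l ≠ rt`; since the forcer rt is ...
            subst h1
            injection h2 with h2
            subst h2
            have hmn : m ≤ n := by
              by_contra hc
              push_neg at hc
              -- rt (d+1) is a neighbour of emb x (rt d) = u; is it in stg n ?  Not
              -- necessarily; but `hall` applies : rt (d+1) ≠ emb x l
              exact hrm (stg_mono (by omega)
                (hall _ (((adj_rt_emb x _).2 rfl).symm) (Ne.symm (emb_ne_rt x l))))
            exact key n hmn oracle
          · injection h1 with h1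
            subst h2
            rw [← h1] at h3
            have hb : emb x b ∈ stg (Td (d+1)) S n := by
              refine hall _ ((adj_emb_emb x l' b).2 h3) ?_
              intro hc
              exact hne (by rw [emb_inj x hc])
            exact oracle _ hb (some b) rfl
  intro v
  match v with
  | none =>
    obtain ⟨n, hn⟩ := reach_exists_stg (h (rt (d+1)))
    exact main n _ hn none rfl
  | some l =>
    obtain ⟨n, hn⟩ := reach_exists_stg (h (emb x l))
    exact main n _ hn (some l) rfl

end Projections2

section Projections3

/-- map for the `x`-side of the big pendant tree, root as pendant. -/
def phiP {d : ℕ} (x : Fin 2) (a : Option (Vd d)) : Option (Vd (d+1)) :=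
  a.elim (some (rt (d+1))) (fun l => some (emb x l))

/-- (P3) c-type projection from the big pendant tree, unconditional. -/
lemma cproj_P {d : ℕ} (T : Set (Option (Vd (d+1)))) (x : Fin 2)
    (h : Propagates (Pd (d+1)) T) :
    Propagates (Pd d) (insert none (some '' {l : Vd d | some (emb x l) ∈ T})) := by
  set T' : Set (Option (Vd d)) := insert none (some '' {l : Vd d | some (emb x l) ∈ T}) with hT'
  have main : ∀ n v, v ∈ stg (Pd (d+1)) T n →
      ∀ a : Option (Vd d), v = phiP x a → PropReach (Pd d) T' a := by
    refine stg_rec ?_ ?_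
    · rintro v hv (_ | l) rfl
      · exact PropReach.base (Set.mem_insert _ _)
      · exact PropReach.base (Set.mem_insert_of_mem _ ⟨l, hv, rfl⟩)
    · rintro n u v hu hadj hall oracle (_ | l) rfl
      · exact PropReach.base (Set.mem_insert _ _)
      · rcases pdadj_emb_cases x l u hadj with ⟨rfl, rfl⟩ | ⟨l', rfl, hadj'⟩
        · -- forcer is the big root, target is `some (emb x (rt d))`; use the pendant
          refine PropReach.step (PropReach.base (Set.mem_insert _ _))
            ((pd_adj_none _).2 rfl) ?_
          intro z hz hne
          rw [pd_adj_none] at hz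
          exact absurd hz hne
        · have hreach : PropReach (Pd d) T' (some l') := oracle _ hu (some l') rfl
          refine PropReach.step hreach ((pd_adj_some l' l).2 hadj'.symm) ?_
          intro z hz hne
          rcases pd_adj_cases _ _ hz with ⟨h1, _⟩ | ⟨h1, h2⟩ | ⟨a', b, h1, h2, h3⟩
          · exact absurd h1 (fun hc => nomatch hc)
          · exact h1 ▸ PropReach.base (Set.mem_insert _ _)
          · injection h1 with h1
            subst h2
            rw [← h1] at h3
            have hb : some (emb x b) ∈ stg (Pd (d+1)) T n := by
              refine hall _ ((pd_adj_some _ _).2 ((adj_emb_emb x l' b).2 h3)) ?_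
              intro hc
              injection hc with hc
              exact hne (by rw [emb_inj x hc])
            exact oracle _ hb (some b) rfl
  intro v
  match v with
  | none => exact PropReach.base (Set.mem_insert _ _)
  | some l =>
    obtain ⟨n, hn⟩ := reach_exists_stg (h (some (emb x l)))
    exact main n _ hn (some l) rfl

/-- the bad-case predicate : the big root can force the `x`-side top while the latter is
still unreached. -/
def Wbad {d : ℕ} (T : Set (Option (Vd (d+1)))) (x : Fin 2) : Prop :=
  ∃ m, some (emb x (rt d)) ∉ stg (Pd (d+1)) T m ∧ some (rt (d+1)) ∈ stg (Pd (d+1)) T m ∧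
    ∀ y, (Pd (d+1)).Adj (some (rt (d+1))) y → y ≠ some (emb x (rt d)) →
      y ∈ stg (Pd (d+1)) T m

/-- (P4) a-type projection from the big pendant tree, assuming the root never usefully
forces down the `x`-side. -/
lemma aproj_P {d : ℕ} (T : Set (Option (Vd (d+1)))) (x : Fin 2)
    (hW : ¬ Wbad T x) (h : Propagates (Pd (d+1)) T) :
    Propagates (Td d) {l : Vd d | some (emb x l) ∈ T} := by
  set S' : Set (Vd d) := {l : Vd d | some (emb x l) ∈ T} with hS'
  have main : ∀ n v, v ∈ stg (Pd (d+1)) T n →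
      ∀ a : Vd d, v = some (emb x a) → PropReach (Td d) S' a := by
    refine stg_rec ?_ ?_
    · rintro v hv a rfl
      exact PropReach.base hv
    · rintro n u v hu hadj hall oracle a rfl
      rcases pdadj_emb_cases x a u hadj with ⟨rfl, rfl⟩ | ⟨l', rfl, hadj'⟩
      · -- forcer is the big root
        by_cases hx : some (emb x (rt d)) ∈ stg (Pd (d+1)) T n
        · exact oracle _ hx (rt d) rfl
        · exact absurd ⟨n, hx, hu, fun y hy hne => hall y hy hne⟩ hW
      · have hreach : PropReach (Td d) S' l' := oracle _ hu l' rfl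
        refine PropReach.step hreach hadj'.symm ?_
        intro z hz hne
        have hb : some (emb x z) ∈ stg (Pd (d+1)) T n := by
          refine hall _ ((pd_adj_some _ _).2 ((adj_emb_emb x l' z).2 hz)) ?_
          intro hc
          injection hc with hc
          exact hne (emb_inj x hc)
        exact oracle _ hb z rfl
  intro v
  obtain ⟨n, hn⟩ := reach_exists_stg (h (some (emb x v)))
  exact main n _ hn v rfl

/-- (P5) b-type projection from the big pendant tree. -/
lemma bproj_P {d : ℕ} {T : Set (Option (Vd (d+1)))} (x : Fin 2)
    (hr : some (rt (d+1)) ∉ T)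
    (m : ℕ) (hrm : some (rt (d+1)) ∉ stg (Pd (d+1)) T m)
    (hxm : some (emb x (rt d)) ∈ stg (Pd (d+1)) T m)
    (hallm : ∀ y, (Pd (d+1)).Adj (some (emb x (rt d))) y → y ≠ some (rt (d+1)) →
      y ∈ stg (Pd (d+1)) T m)
    (h : Propagates (Pd (d+1)) T) :
    Propagates (Pd d) (some '' {l : Vd d | some (emb x l) ∈ T}) := by
  set T' : Set (Option (Vd d)) := some '' {l : Vd d | some (emb x l) ∈ T} with hT'
  have key : ∀ n, m ≤ n → (∀ b, b ∈ stg (Pd (d+1)) T n →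
      ∀ a : Option (Vd d), b = phiP x a → PropReach (Pd d) T' a) →
      PropReach (Pd d) T' none := by
    intro n hmn oracle
    have hroot : PropReach (Pd d) T' (some (rt d)) :=
      oracle _ (stg_mono hmn hxm) (some (rt d)) rfl
    refine PropReach.step hroot ((pd_adj_some_none _).2 rfl) ?_
    intro z hz hne
    rcases pd_adj_cases _ _ hz with ⟨h1, _⟩ | ⟨h1, h2⟩ | ⟨a', b, h1, h2, h3⟩
    · exact absurd h1 (fun hc => nomatch hc)
    · exact absurd h1 hne
    · injection h1 with h1
      subst h2
      rw [← h1] at h3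
      have hb : some (emb x b) ∈ stg (Pd (d+1)) T m := by
        refine hallm _ ((pd_adj_some _ _).2 ((adj_emb_emb x (rt d) b).2 h3)) ?_
        intro hc
        injection hc with hc
        exact (emb_ne_rt x b) hc
      exact oracle _ (stg_mono hmn hb) (some b) rfl
  have main : ∀ n v, v ∈ stg (Pd (d+1)) T n →
      ∀ a : Option (Vd d), v = phiP x a → PropReach (Pd d) T' a := by
    refine stg_rec ?_ ?_
    · rintro v hv (_ | l) rfl
      · exact absurd hv hr
      · exact PropReach.base ⟨l, hv, rfl⟩
    · rintro n u v hu hadj hall oracle (_ | l) rfl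
      · -- target is the big root
        have hev : some (rt (d+1)) ∈ stg (Pd (d+1)) T (n+1) := by
          rw [stg]
          exact Set.mem_union_right _ ⟨u, hu, hadj, hall⟩
        have hmn : m ≤ n := by
          by_contra hc
          push_neg at hc
          exact hrm (stg_mono (by omega) hev)
        exact key n hmn oracle
      · rcases pdadj_emb_cases x l u hadj with ⟨rfl, rfl⟩ | ⟨l', rfl, hadj'⟩
        · -- forcer is the big root, already reached at stage n
          have hmn : m ≤ n := by
            by_contra hc
            push_neg at hc
            exact hrm (stg_mono (by omega) hu)
          have hnone : PropReach (Pd d) T' none := key n hmn oracle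
          refine PropReach.step hnone ((pd_adj_none _).2 rfl) ?_
          intro z hz hne
          rw [pd_adj_none] at hz
          exact absurd hz hne
        · have hreach : PropReach (Pd d) T' (some l') := oracle _ hu (some l') rfl
          refine PropReach.step hreach ((pd_adj_some l' l).2 hadj'.symm) ?_
          intro z hz hne
          rcases pd_adj_cases _ _ hz with ⟨h1, _⟩ | ⟨h1, h2⟩ | ⟨a', b, h1, h2, h3⟩
          · exact absurd h1 (fun hc => nomatch hc)
          · subst h1
            injection h2 with h2
            subst h2
            have hmn : m ≤ n := by
              by_contra hc
              push_neg at hc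
              refine hrm (stg_mono (by omega) (hall _ ?_ ?_))
              · exact ((pd_adj_some _ _).2 (((adj_rt_emb x _).2 rfl).symm))
              · intro hc2
                injection hc2 with hc2
                exact (emb_ne_rt x l) hc2.symm
            exact key n hmn oracle
          · injection h1 with h1
            subst h2
            rw [← h1] at h3
            have hb : some (emb x b) ∈ stg (Pd (d+1)) T n := by
              refine hall _ ((pd_adj_some _ _).2 ((adj_emb_emb x l' b).2 h3)) ?_
              intro hc
              injection hc with hc
              exact hne (by rw [emb_inj x hc])
            exact oracle _ hb (some b) rfl
  intro v
  match v with
  | none =>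
    obtain ⟨n, hn⟩ := reach_exists_stg (h (some (rt (d+1))))
    exact main n _ hn none rfl
  | some l =>
    obtain ⟨n, hn⟩ := reach_exists_stg (h (some (emb x l)))
    exact main n _ hn (some l) rfl

end Projections3

section Lifts

lemma fin2_eq_or (z x x' : Fin 2) (h : x ≠ x') : z = x ∨ z = x' := by
  by_cases hzx : z = x
  · exact Or.inl hzx
  · right
    have h1 : x.val ≠ x'.val := fun hc => h (Fin.ext hc)
    have h2 : z.val ≠ x.val := fun hc => hzx (Fin.ext hc)
    have := z.isLt; have := x.isLt; have := x'.isLt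
    exact Fin.ext (by omega)

lemma adj_emb_rt {d : ℕ} (x : Fin 2) : (Td (d+1)).Adj (emb x (rt d)) (rt (d+1)) :=
  ((adj_rt_emb x (rt d)).2 rfl).symm

/-- entry of the pendant in the small pendant graph : the root was in earlier. -/
lemma pendant_entry {d : ℕ} {T₀ : Set (Option (Vd d))}
    (hT₀ : none ∉ T₀) {n : ℕ} (hn : none ∈ stg (Pd d) T₀ n) :
    some (rt d) ∈ stg (Pd d) T₀ n := by
  rcases stg_entry hn with hc | ⟨m, hm, u', hu', hadj', _⟩
  · exact absurd hc hT₀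
  · rcases pd_adj_cases _ _ hadj' with ⟨_, h2⟩ | ⟨_, h2⟩ | ⟨a', b, _, h2, _⟩
    · exact absurd h2 (fun hc => nomatch hc)
    · exact h2 ▸ stg_mono (le_of_lt hm) hu'
    · exact absurd h2 (fun hc => nomatch hc)

/-- (P6) the main upper-bound construction for `aN (d+1)`. -/
lemma lift_a {d : ℕ} {x x' : Fin 2} (hxx : x ≠ x') {SA SC : Set (Vd d)}
    (hA : Propagates (Pd d) (some '' SA))
    (hC : Propagates (Pd d) (insert none (some '' SC))) :
    Propagates (Td (d+1)) (emb x '' SA ∪ emb x' '' SC) := by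
  set SH : Set (Vd (d+1)) := emb x '' SA ∪ emb x' '' SC with hSH
  -- step (i) : lift the x-side together with the root
  have main₁ : ∀ n a, a ∈ stg (Pd d) (some '' SA) n →
      PropReach (Td (d+1)) SH (phiT x a) := by
    refine stg_rec ?_ ?_
    · rintro a ⟨l, hl, rfl⟩
      exact PropReach.base (Or.inl ⟨l, hl, rfl⟩)
    · rintro n (_ | b) a hu hGadj hGhall oracle
      · -- forcer is the pendant ; redundant step
        rw [pd_adj_none] at hGadj
        subst hGadj
        have : some (rt d) ∈ stg (Pd d) (some '' SA) n :=
          pendant_entry (by rintro ⟨l, _, hc⟩; exact nomatch hc) hu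
        exact oracle _ this
      · match a with
        | none =>
          -- target is the big root, forcer is `some b` with b = rt d
          rw [pd_adj_some_none] at hGadj
          subst hGadj
          refine PropReach.step (oracle _ hu) (adj_emb_rt x) ?_
          intro y hy hne
          rcases adj_emb_cases x (rt d) y hy with ⟨_, rfl⟩ | ⟨l'', rfl, hadj''⟩
          · exact absurd rfl hne
          · have : some l'' ∈ stg (Pd d) (some '' SA) n :=
              hGhall _ ((pd_adj_some _ _).2 hadj'') (fun hc => nomatch hc)
            exact oracle _ this
        | some l =>
          rw [pd_adj_some] at hGadj
          refine PropReach.step (oracle _ hu) ((adj_emb_emb x b l).2 hGadj) ?_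
          intro y hy hne
          rcases adj_emb_cases x b y hy with ⟨rfl, rfl⟩ | ⟨l'', rfl, hadj''⟩
          · -- y is the big root
            have : none ∈ stg (Pd d) (some '' SA) n := by
              refine hGhall none ((pd_adj_some_none _).2 rfl) ?_
              exact fun hc => nomatch hc
            exact oracle _ this
          · have : some l'' ∈ stg (Pd d) (some '' SA) n := by
              refine hGhall _ ((pd_adj_some _ _).2 hadj'') ?_
              intro hc
              injection hc with hc
              exact hne (by rw [hc]; rfl)
            exact oracle _ this
  have reach₁ : ∀ a : Option (Vd d), PropReach (Td (d+1)) SH (phiT x a) := by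
    intro a
    obtain ⟨n, hn⟩ := reach_exists_stg (hA a)
    exact main₁ n a hn
  -- step (ii) : lift the x'-side, with the root already reached
  have main₂ : ∀ n a, a ∈ stg (Pd d) (insert none (some '' SC)) n →
      PropReach (Td (d+1)) SH (phiT x' a) := by
    refine stg_rec ?_ ?_
    · rintro a ha
      rcases ha with rfl | ⟨l, hl, rfl⟩
      · exact reach₁ none
      · exact PropReach.base (Or.inr ⟨l, hl, rfl⟩)
    · rintro n (_ | b) a hu hGadj hGhall oracle
      · -- forcer is the pendant, i.e. the big root
        rw [pd_adj_none] at hGadj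
        subst hGadj
        refine PropReach.step (reach₁ none) ((adj_rt_emb x' (rt d)).2 rfl) ?_
        intro y hy hne
        obtain ⟨z, rfl⟩ := adj_rt_cases y hy
        rcases fin2_eq_or z x x' hxx with rfl | rfl
        · exact reach₁ (some (rt d))
        · exact absurd rfl hne
      · match a with
        | none => exact reach₁ none
        | some l =>
          rw [pd_adj_some] at hGadj
          refine PropReach.step (oracle _ hu) ((adj_emb_emb x' b l).2 hGadj) ?_
          intro y hy hne
          rcases adj_emb_cases x' b y hy with ⟨rfl, rfl⟩ | ⟨l'', rfl, hadj''⟩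
          · exact reach₁ none
          · have : some l'' ∈ stg (Pd d) (insert none (some '' SC)) n := by
              refine hGhall _ ((pd_adj_some _ _).2 hadj'') ?_
              intro hc
              injection hc with hc
              exact hne (by rw [hc]; rfl)
            exact oracle _ this
  have reach₂ : ∀ a : Option (Vd d), PropReach (Td (d+1)) SH (phiT x' a) := by
    intro a
    obtain ⟨n, hn⟩ := reach_exists_stg (hC a)
    exact main₂ n a hn
  intro v
  rcases vertex_cases v with rfl | ⟨z, l, rfl⟩
  · exact reach₁ none
  · rcases fin2_eq_or z x x' hxx with rfl | rfl
    · exact reach₁ (some l)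
    · exact reach₂ (some l)

end Lifts

section Lifts2

lemma pdadj_some_emb_rt {d : ℕ} (x : Fin 2) :
    (Pd (d+1)).Adj (some (emb x (rt d))) (some (rt (d+1))) :=
  (pd_adj_some _ _).2 (adj_emb_rt x)

/-- (P7) upper-bound construction for `bN (d+1)`. -/
lemma lift_b {d : ℕ} {x x' : Fin 2} (hxx : x ≠ x') {SA SB : Set (Vd d)}
    (hA : Propagates (Pd d) (some '' SA))
    (hB : Propagates (Td d) SB) :
    Propagates (Pd (d+1)) (some '' (emb x '' SA ∪ emb x' '' SB)) := by
  set SH : Set (Option (Vd (d+1))) := some '' (emb x '' SA ∪ emb x' '' SB) with hSH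
  have hbase₁ : ∀ l ∈ SA, some (emb x l) ∈ SH := fun l hl => ⟨_, Or.inl ⟨l, hl, rfl⟩, rfl⟩
  have hbase₂ : ∀ l ∈ SB, some (emb x' l) ∈ SH := fun l hl => ⟨_, Or.inr ⟨l, hl, rfl⟩, rfl⟩
  -- step (i) : x-side with the root
  have main₁ : ∀ n a, a ∈ stg (Pd d) (some '' SA) n →
      PropReach (Pd (d+1)) SH (phiP x a) := by
    refine stg_rec ?_ ?_
    · rintro a ⟨l, hl, rfl⟩
      exact PropReach.base (hbase₁ l hl)
    · rintro n (_ | b) a hu hGadj hGhall oracle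
      · rw [pd_adj_none] at hGadj
        subst hGadj
        have : some (rt d) ∈ stg (Pd d) (some '' SA) n :=
          pendant_entry (by rintro ⟨l, _, hc⟩; exact nomatch hc) hu
        exact oracle _ this
      · match a with
        | none =>
          rw [pd_adj_some_none] at hGadj
          subst hGadj
          refine PropReach.step (oracle _ hu) (pdadj_some_emb_rt x) ?_
          intro y hy hne
          rcases pdadj_emb_cases x (rt d) y hy.symm with ⟨_, rfl⟩ | ⟨l'', rfl, hadj''⟩
          · exact absurd rfl hne
          · have : some l'' ∈ stg (Pd d) (some '' SA) n :=
              hGhall _ ((pd_adj_some _ _).2 hadj'') (fun hc => nomatch hc)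
            exact oracle _ this
        | some l =>
          rw [pd_adj_some] at hGadj
          refine PropReach.step (oracle _ hu)
            ((pd_adj_some _ _).2 ((adj_emb_emb x b l).2 hGadj)) ?_
          intro y hy hne
          rcases pdadj_emb_cases x b y hy.symm with ⟨rfl, rfl⟩ | ⟨l'', rfl, hadj''⟩
          · have : none ∈ stg (Pd d) (some '' SA) n := by
              refine hGhall none ((pd_adj_some_none _).2 rfl) ?_
              exact fun hc => nomatch hc
            exact oracle _ this
          · have : some l'' ∈ stg (Pd d) (some '' SA) n := by
              refine hGhall _ ((pd_adj_some _ _).2 hadj'') ?_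
              intro hc
              injection hc with hc
              exact hne (by rw [hc]; rfl)
            exact oracle _ this
  have reach₁ : ∀ a : Option (Vd d), PropReach (Pd (d+1)) SH (phiP x a) := by
    intro a
    obtain ⟨n, hn⟩ := reach_exists_stg (hA a)
    exact main₁ n a hn
  -- step (ii) : x'-side
  have main₂ : ∀ n a, a ∈ stg (Td d) SB n →
      PropReach (Pd (d+1)) SH (some (emb x' a)) := by
    refine stg_rec ?_ ?_
    · exact fun a ha => PropReach.base (hbase₂ a ha)
    · rintro n b a hu hGadj hGhall oracle
      refine PropReach.step (oracle _ hu)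
        ((pd_adj_some _ _).2 ((adj_emb_emb x' b a).2 hGadj)) ?_
      intro y hy hne
      rcases pdadj_emb_cases x' b y hy.symm with ⟨rfl, rfl⟩ | ⟨l'', rfl, hadj''⟩
      · exact reach₁ none
      · have : l'' ∈ stg (Td d) SB n := by
          refine hGhall _ hadj'' ?_
          intro hc
          exact hne (by rw [hc])
        exact oracle _ this
  have reach₂ : ∀ a : Vd d, PropReach (Pd (d+1)) SH (some (emb x' a)) := by
    intro a
    obtain ⟨n, hn⟩ := reach_exists_stg (hB a)
    exact main₂ n a hn
  -- (iii) the pendant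
  have reach₀ : PropReach (Pd (d+1)) SH none := by
    refine PropReach.step (reach₁ none) ((pd_adj_some_none _).2 rfl) ?_
    intro y hy hne
    rcases pdadj_rt_cases y hy.symm with rfl | ⟨z, rfl⟩
    · exact absurd rfl hne
    · rcases fin2_eq_or z x x' hxx with rfl | rfl
      · exact reach₁ (some (rt d))
      · exact reach₂ (rt d)
  intro v
  match v with
  | none => exact reach₀
  | some w =>
    rcases vertex_cases w with rfl | ⟨z, l, rfl⟩
    · exact reach₁ none
    · rcases fin2_eq_or z x x' hxx with rfl | rfl
      · exact reach₁ (some l)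
      · exact reach₂ l

/-- (P8) upper-bound construction for `cN (d+1)`. -/
lemma lift_c {d : ℕ} {x x' : Fin 2} (hxx : x ≠ x') {SA SC : Set (Vd d)}
    (hA : Propagates (Td d) SA)
    (hC : Propagates (Pd d) (insert none (some '' SC))) :
    Propagates (Pd (d+1)) (insert none (some '' (emb x '' SA ∪ emb x' '' SC))) := by
  set SH : Set (Option (Vd (d+1))) := insert none (some '' (emb x '' SA ∪ emb x' '' SC))
    with hSH
  have hbase₁ : ∀ l ∈ SA, some (emb x l) ∈ SH :=
    fun l hl => Set.mem_insert_of_mem _ ⟨_, Or.inl ⟨l, hl, rfl⟩, rfl⟩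
  have hbase₂ : ∀ l ∈ SC, some (emb x' l) ∈ SH :=
    fun l hl => Set.mem_insert_of_mem _ ⟨_, Or.inr ⟨l, hl, rfl⟩, rfl⟩
  -- the root, forced by the pendant
  have hr : PropReach (Pd (d+1)) SH (some (rt (d+1))) := by
    refine PropReach.step (PropReach.base (Set.mem_insert _ _)) ((pd_adj_none _).2 rfl) ?_
    intro y hy hne
    rw [pd_adj_none] at hy
    exact absurd hy hne
  -- (i) the x-side
  have main₁ : ∀ n a, a ∈ stg (Td d) SA n →
      PropReach (Pd (d+1)) SH (some (emb x a)) := by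
    refine stg_rec ?_ ?_
    · exact fun a ha => PropReach.base (hbase₁ a ha)
    · rintro n b a hu hGadj hGhall oracle
      refine PropReach.step (oracle _ hu)
        ((pd_adj_some _ _).2 ((adj_emb_emb x b a).2 hGadj)) ?_
      intro y hy hne
      rcases pdadj_emb_cases x b y hy.symm with ⟨rfl, rfl⟩ | ⟨l'', rfl, hadj''⟩
      · exact hr
      · have : l'' ∈ stg (Td d) SA n := by
          refine hGhall _ hadj'' ?_
          intro hc
          exact hne (by rw [hc])
        exact oracle _ this
  have reach₁ : ∀ a : Vd d, PropReach (Pd (d+1)) SH (some (emb x a)) := by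
    intro a
    obtain ⟨n, hn⟩ := reach_exists_stg (hA a)
    exact main₁ n a hn
  -- (ii) the x'-side, helped by the root
  have main₂ : ∀ n a, a ∈ stg (Pd d) (insert none (some '' SC)) n →
      PropReach (Pd (d+1)) SH (phiP x' a) := by
    refine stg_rec ?_ ?_
    · rintro a ha
      rcases ha with rfl | ⟨l, hl, rfl⟩
      · exact hr
      · exact PropReach.base (hbase₂ l hl)
    · rintro n (_ | b) a hu hGadj hGhall oracle
      · -- forcer is the pendant of the small graph, i.e. the big root
        rw [pd_adj_none] at hGadj
        subst hGadj
        refine PropReach.step hr ((pd_adj_some _ _).2 ((adj_rt_emb x' (rt d)).2 rfl)) ?_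
        intro y hy hne
        rcases pdadj_rt_cases y hy.symm with rfl | ⟨z, rfl⟩
        · exact PropReach.base (Set.mem_insert _ _)
        · rcases fin2_eq_or z x x' hxx with rfl | rfl
          · exact reach₁ (rt d)
          · exact absurd rfl hne
      · match a with
        | none => exact hr
        | some l =>
          rw [pd_adj_some] at hGadj
          refine PropReach.step (oracle _ hu)
            ((pd_adj_some _ _).2 ((adj_emb_emb x' b l).2 hGadj)) ?_
          intro y hy hne
          rcases pdadj_emb_cases x' b y hy.symm with ⟨rfl, rfl⟩ | ⟨l'', rfl, hadj''⟩
          · exact hr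
          · have : some l'' ∈ stg (Pd d) (insert none (some '' SC)) n := by
              refine hGhall _ ((pd_adj_some _ _).2 hadj'') ?_
              intro hc
              injection hc with hc
              exact hne (by rw [hc]; rfl)
            exact oracle _ this
  have reach₂ : ∀ a : Option (Vd d), PropReach (Pd (d+1)) SH (phiP x' a) := by
    intro a
    obtain ⟨n, hn⟩ := reach_exists_stg (hC a)
    exact main₂ n a hn
  intro v
  match v with
  | none => exact PropReach.base (Set.mem_insert _ _)
  | some w =>
    rcases vertex_cases w with rfl | ⟨z, l, rfl⟩
    · exact hr
    · rcases fin2_eq_or z x x' hxx with rfl | rfl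
      · exact reach₁ l
      · exact reach₂ (some l)

end Lifts2

section Counting

lemma mem_some_image {α : Type*} (S : Set α) (a : α) : some a ∈ some '' S ↔ a ∈ S := by
  constructor
  · rintro ⟨w, hw, he⟩
    injection he with he
    rwa [← he]
  · exact fun h => ⟨a, h, rfl⟩

lemma parts_le {d : ℕ} {x x' : Fin 2} (hxx : x ≠ x') (S : Set (Vd (d+1))) :
    (emb x ⁻¹' S).ncard + (emb x' ⁻¹' S).ncard ≤ S.ncard := by
  have h1 : emb x '' (emb x ⁻¹' S) ∪ emb x' '' (emb x' ⁻¹' S) ⊆ S := by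
    rintro v (⟨l, hl, rfl⟩ | ⟨l, hl, rfl⟩) <;> exact hl
  have hdisj : Disjoint (emb x '' (emb x ⁻¹' S)) (emb x' '' (emb x' ⁻¹' S)) := by
    rw [Set.disjoint_left]
    rintro v ⟨l, _, rfl⟩ ⟨l', _, he⟩
    exact emb_ne_emb (Ne.symm hxx) l' l he
  calc (emb x ⁻¹' S).ncard + (emb x' ⁻¹' S).ncard
      = (emb x '' (emb x ⁻¹' S)).ncard + (emb x' '' (emb x' ⁻¹' S)).ncard := by
        rw [Set.ncard_image_of_injective _ (emb_inj x),
          Set.ncard_image_of_injective _ (emb_inj x')]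
    _ = (emb x '' (emb x ⁻¹' S) ∪ emb x' '' (emb x' ⁻¹' S)).ncard :=
        (Set.ncard_union_eq hdisj).symm
    _ ≤ S.ncard := Set.ncard_le_ncard h1 (Set.toFinite S)

lemma parts_le_rt {d : ℕ} {x x' : Fin 2} (hxx : x ≠ x') {S : Set (Vd (d+1))}
    (hr : rt (d+1) ∈ S) :
    1 + ((emb x ⁻¹' S).ncard + (emb x' ⁻¹' S).ncard) ≤ S.ncard := by
  have h1 : insert (rt (d+1)) (emb x '' (emb x ⁻¹' S) ∪ emb x' '' (emb x' ⁻¹' S)) ⊆ S := by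
    rintro v (rfl | (⟨l, hl, rfl⟩ | ⟨l, hl, rfl⟩)) <;> first | exact hr | exact hl
  have hdisj : Disjoint (emb x '' (emb x ⁻¹' S)) (emb x' '' (emb x' ⁻¹' S)) := by
    rw [Set.disjoint_left]
    rintro v ⟨l, _, rfl⟩ ⟨l', _, he⟩
    exact emb_ne_emb (Ne.symm hxx) l' l he
  have hnm : rt (d+1) ∉ emb x '' (emb x ⁻¹' S) ∪ emb x' '' (emb x' ⁻¹' S) := by
    rintro (⟨l, _, he⟩ | ⟨l, _, he⟩) <;> exact emb_ne_rt _ l he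
  calc 1 + ((emb x ⁻¹' S).ncard + (emb x' ⁻¹' S).ncard)
      = 1 + ((emb x '' (emb x ⁻¹' S)).ncard + (emb x' '' (emb x' ⁻¹' S)).ncard) := by
        rw [Set.ncard_image_of_injective _ (emb_inj x),
          Set.ncard_image_of_injective _ (emb_inj x')]
    _ = 1 + (emb x '' (emb x ⁻¹' S) ∪ emb x' '' (emb x' ⁻¹' S)).ncard := by
        rw [Set.ncard_union_eq hdisj]
    _ = (insert (rt (d+1)) (emb x '' (emb x ⁻¹' S) ∪ emb x' '' (emb x' ⁻¹' S))).ncard := by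
        rw [Set.ncard_insert_of_notMem hnm]; omega
    _ ≤ S.ncard := Set.ncard_le_ncard h1 (Set.toFinite S)

end Counting

section UpperBounds

lemma Ua (d : ℕ) : aN (d+1) ≤ bN d + cN d := by
  obtain ⟨SA, hcA, hA⟩ := bN_spec d
  obtain ⟨SC, hcC, hC⟩ := cN_spec d
  have hp := lift_a (show (0:Fin 2) ≠ 1 by decide) hA hC
  calc aN (d+1) ≤ (emb 0 '' SA ∪ emb 1 '' SC).ncard := aN_le hp
    _ ≤ (emb 0 '' SA).ncard + (emb 1 '' SC).ncard := Set.ncard_union_le _ _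
    _ = bN d + cN d := by
        rw [Set.ncard_image_of_injective _ (emb_inj 0),
          Set.ncard_image_of_injective _ (emb_inj 1), hcA, hcC]

lemma Ub (d : ℕ) : bN (d+1) ≤ bN d + aN d := by
  obtain ⟨SA, hcA, hA⟩ := bN_spec d
  obtain ⟨SB, hcB, hB⟩ := aN_spec d
  have hp := lift_b (show (0:Fin 2) ≠ 1 by decide) hA hB
  calc bN (d+1) ≤ (emb 0 '' SA ∪ emb 1 '' SB).ncard := bN_le hp
    _ ≤ (emb 0 '' SA).ncard + (emb 1 '' SB).ncard := Set.ncard_union_le _ _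
    _ = bN d + aN d := by
        rw [Set.ncard_image_of_injective _ (emb_inj 0),
          Set.ncard_image_of_injective _ (emb_inj 1), hcA, hcB]

lemma Uc (d : ℕ) : cN (d+1) ≤ aN d + cN d := by
  obtain ⟨SA, hcA, hA⟩ := aN_spec d
  obtain ⟨SC, hcC, hC⟩ := cN_spec d
  have hp := lift_c (show (0:Fin 2) ≠ 1 by decide) hA hC
  calc cN (d+1) ≤ (emb 0 '' SA ∪ emb 1 '' SC).ncard := cN_le hp
    _ ≤ (emb 0 '' SA).ncard + (emb 1 '' SC).ncard := Set.ncard_union_le _ _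
    _ = aN d + cN d := by
        rw [Set.ncard_image_of_injective _ (emb_inj 0),
          Set.ncard_image_of_injective _ (emb_inj 1), hcA, hcC]

end UpperBounds

section LowerBounds

/-- first time a non-initial vertex is reached. -/
lemma first_stage {α : Type*} {G : SimpleGraph α} {S : Set α} {v : α}
    (h : ∃ n, v ∈ stg G S n) (hv : v ∉ S) :
    ∃ m, v ∉ stg G S m ∧ ∃ u ∈ stg G S m, G.Adj u v ∧
      ∀ z, G.Adj u z → z ≠ v → z ∈ stg G S m := by
  classical
  have hn : Nat.find h ≠ 0 := fun hc => hv (by have := Nat.find_spec h; rwa [hc] at this)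
  obtain ⟨m, hm⟩ := Nat.exists_eq_succ_of_ne_zero hn
  have hvm : v ∉ stg G S m := fun hc => by
    have := Nat.find_min h (m := m) (by omega)
    exact this hc
  have hv1 : v ∈ stg G S (m+1) := by have := Nat.find_spec h; rwa [hm] at this
  rcases hv1 with hc | ⟨u, hu, hadj, hall⟩
  · exact absurd hc hvm
  · exact ⟨m, hvm, u, hu, hadj, hall⟩

def oth (z : Fin 2) : Fin 2 := if z = 0 then 1 else 0

lemma oth_ne (z : Fin 2) : z ≠ oth z := by
  revert z; decide

lemma preim_eq_some {d : ℕ} (S' : Set (Vd (d+1))) (z : Fin 2) :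
    {l : Vd d | some (emb z l) ∈ some '' S'} = emb z ⁻¹' S' := by
  ext l
  simp only [Set.mem_setOf_eq, mem_some_image, Set.mem_preimage]

lemma preim_eq_insert {d : ℕ} (S' : Set (Vd (d+1))) (z : Fin 2) :
    {l : Vd d | some (emb z l) ∈ insert none (some '' S')} = emb z ⁻¹' S' := by
  ext l
  simp only [Set.mem_setOf_eq, Set.mem_insert_iff, mem_some_image, Set.mem_preimage,
    reduceCtorEq, false_or]

/-- (La) lower bound for `aN (d+1)`. -/
lemma La (d : ℕ) : min (bN d + cN d) (1 + (cN d + cN d)) ≤ aN (d+1) := by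
  obtain ⟨S, hcS, hS⟩ := aN_spec (d+1)
  rw [← hcS]
  by_cases hr : rt (d+1) ∈ S
  · refine le_trans (min_le_right _ _) ?_
    refine le_trans ?_ (parts_le_rt (show (0:Fin 2) ≠ 1 by decide) hr)
    have h0 : cN d ≤ (emb 0 ⁻¹' S).ncard := cN_le (cproj_T S 0 hS)
    have h1 : cN d ≤ (emb 1 ⁻¹' S).ncard := cN_le (cproj_T S 1 hS)
    omega
  · refine le_trans (min_le_left _ _) ?_
    obtain ⟨m, hrm, u, hu, hadj, hall⟩ :=
      first_stage (reach_exists_stg (hS (rt (d+1)))) hr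
    obtain ⟨y, rfl⟩ := adj_rt_cases u hadj.symm
    have hb : bN d ≤ (emb y ⁻¹' S).ncard :=
      bN_le (bproj_T y hr m hrm hu hall hS)
    have hc : cN d ≤ (emb (oth y) ⁻¹' S).ncard := cN_le (cproj_T S (oth y) hS)
    have := parts_le (oth_ne y).symm.symm S
    have hle := parts_le (d := d) (x := y) (x' := oth y) (oth_ne y) S
    omega

/-- no useful downward force from the root when the pendant starts empty. -/
lemma not_Wbad_of_no_pendant {d : ℕ} {T : Set (Option (Vd (d+1)))}
    (hnone : none ∉ T) (z : Fin 2) : ¬ Wbad T z := by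
  rintro ⟨m, hcz, hrm, hall⟩
  have hnm : none ∈ stg (Pd (d+1)) T m := by
    refine hall none ((pd_adj_some_none _).2 rfl) ?_
    exact fun hc => nomatch hc
  rcases stg_entry hnm with hc | ⟨m', hm', u', hu', hadj', hall'⟩
  · exact hnone hc
  · have hu'r : u' = some (rt (d+1)) := by
      rcases pd_adj_cases _ _ hadj' with ⟨h1, h2⟩ | ⟨_, h2⟩ | ⟨a', b, _, h2, _⟩
      · exact absurd h2 (fun hc => nomatch hc)
      · exact h2
      · exact absurd h2 (fun hc => nomatch hc)
    subst hu'r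
    have : some (emb z (rt d)) ∈ stg (Pd (d+1)) T m' := by
      refine hall' _ ((pd_adj_some _ _).2 ((adj_rt_emb z (rt d)).2 rfl)) ?_
      exact fun hc => nomatch hc
    exact hcz (stg_mono (le_of_lt hm') this)

/-- at most one side can be first-forced by the root. -/
lemma Wbad_not_both {d : ℕ} {T : Set (Option (Vd (d+1)))} {z z' : Fin 2} (hzz : z ≠ z')
    (h1 : Wbad T z) (h2 : Wbad T z') : False := by
  obtain ⟨m, hcz, hrm, hall⟩ := h1
  obtain ⟨m', hcz', hrm', hall'⟩ := h2
  have hz'm : some (emb z' (rt d)) ∈ stg (Pd (d+1)) T m := by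
    refine hall _ ((pd_adj_some _ _).2 ((adj_rt_emb z' (rt d)).2 rfl)) ?_
    intro hc
    injection hc with hc
    exact emb_ne_emb hzz.symm (rt d) (rt d) hc
  have hzm' : some (emb z (rt d)) ∈ stg (Pd (d+1)) T m' := by
    refine hall' _ ((pd_adj_some _ _).2 ((adj_rt_emb z (rt d)).2 rfl)) ?_
    intro hc
    injection hc with hc
    exact emb_ne_emb hzz (rt d) (rt d) hc
  rcases le_total m m' with h | h
  · exact hcz' (stg_mono h hz'm)
  · exact hcz (stg_mono h hzm')

/-- (Lb) lower bound for `bN (d+1)`. -/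
lemma Lb (d : ℕ) : min (bN d + aN d) (1 + (aN d + aN d)) ≤ bN (d+1) := by
  obtain ⟨S', hcS, hS⟩ := bN_spec (d+1)
  rw [← hcS]
  set T : Set (Option (Vd (d+1))) := some '' S' with hT
  have hnoneT : none ∉ T := by rintro ⟨w, _, hc⟩; exact nomatch hc
  have haproj : ∀ z : Fin 2, aN d ≤ (emb z ⁻¹' S').ncard := by
    intro z
    have := aproj_P T z (not_Wbad_of_no_pendant hnoneT z) hS
    rw [hT, preim_eq_some] at this
    exact aN_le this
  by_cases hr : rt (d+1) ∈ S'
  · refine le_trans (min_le_right _ _) ?_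
    refine le_trans ?_ (parts_le_rt (show (0:Fin 2) ≠ 1 by decide) hr)
    have h0 := haproj 0
    have h1 := haproj 1
    omega
  · refine le_trans (min_le_left _ _) ?_
    have hrT : some (rt (d+1)) ∉ T := fun hc => hr ((mem_some_image _ _).1 hc)
    obtain ⟨m, hrm, u, hu, hadj, hall⟩ :=
      first_stage (reach_exists_stg (hS (some (rt (d+1))))) hrT
    rcases pdadj_rt_cases u hadj with rfl | ⟨y, rfl⟩
    · -- the forcer is the pendant : impossible, since its entry needs the root
      exfalso
      rcases stg_entry hu with hc | ⟨m', hm', u', hu', hadj', hall'⟩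
      · exact hnoneT hc
      · have hu'r : u' = some (rt (d+1)) := by
          rcases pd_adj_cases _ _ hadj' with ⟨h1, h2⟩ | ⟨_, h2⟩ | ⟨a', b, _, h2, _⟩
          · exact absurd h2 (fun hc => nomatch hc)
          · exact h2
          · exact absurd h2 (fun hc => nomatch hc)
        subst hu'r
        exact hrm (stg_mono (le_of_lt hm') hu')
    · have hbp := bproj_P y hrT m hrm hu hall hS
      rw [hT, preim_eq_some] at hbp
      have hb : bN d ≤ (emb y ⁻¹' S').ncard := bN_le hbp
      have ha := haproj (oth y)
      have hle := parts_le (d := d) (x := y) (x' := oth y) (oth_ne y) S'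
      omega

/-- (Lc) lower bound for `cN (d+1)`. -/
lemma Lc (d : ℕ) : min (aN d + cN d) (1 + (cN d + cN d)) ≤ cN (d+1) := by
  obtain ⟨S', hcS, hS⟩ := cN_spec (d+1)
  rw [← hcS]
  set T : Set (Option (Vd (d+1))) := insert none (some '' S') with hT
  have hcproj : ∀ z : Fin 2, cN d ≤ (emb z ⁻¹' S').ncard := by
    intro z
    have := cproj_P T z hS
    rw [hT, preim_eq_insert] at this
    exact cN_le this
  by_cases hr : rt (d+1) ∈ S'
  · refine le_trans (min_le_right _ _) ?_
    refine le_trans ?_ (parts_le_rt (show (0:Fin 2) ≠ 1 by decide) hr)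
    have h0 := hcproj 0
    have h1 := hcproj 1
    omega
  · refine le_trans (min_le_left _ _) ?_
    have hW : ¬ Wbad T 0 ∨ ¬ Wbad T 1 := by
      by_contra hc
      push_neg at hc
      exact Wbad_not_both (show (0:Fin 2) ≠ 1 by decide) hc.1 hc.2
    obtain ⟨z, hz⟩ : ∃ z : Fin 2, ¬ Wbad T z := by
      rcases hW with h | h
      · exact ⟨0, h⟩
      · exact ⟨1, h⟩
    have hap := aproj_P T z hz hS
    rw [hT, preim_eq_insert] at hap
    have ha : aN d ≤ (emb z ⁻¹' S').ncard := aN_le hap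
    have hc := hcproj (oth z)
    have hle := parts_le (d := d) (x := z) (x' := oth z) (oth_ne z) S'
    omega

end LowerBounds

section MainValues

lemma main_values : ∀ d, aN d = AN d ∧ bN d = BN d ∧ cN d = CN d := by
  intro d
  induction d with
  | zero =>
    refine ⟨aN_zero, ?_, ?_⟩
    · rw [bN_zero]; simp [BN, AN]
    · rw [cN_zero]; simp [CN, AN]
  | succ d ih =>
    obtain ⟨ha, hb, hc⟩ := ih
    have hUa := Ua d
    have hUb := Ub d
    have hUc := Uc d
    have hLa := La d
    have hLb := Lb d
    have hLc := Lc d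
    simp only [ha, hb, hc] at hUa hUb hUc hLa hLb hLc
    have hpos := AN_pos d
    rcases Nat.even_or_odd d with he | ho
    · have h1 : AN (d+1) = 2 * AN d - 1 := by
        rw [AN]
        rw [if_neg (by simp [Nat.even_add_one, he])]
      have hB : BN d = AN d := by rw [BN, if_pos he]
      have hC : CN d = AN d - 1 := by rw [CN, if_pos he]
      have hB1 : BN (d+1) = AN (d+1) + 1 := by
        rw [BN, if_neg (by simp [Nat.even_add_one, he])]
      have hC1 : CN (d+1) = AN (d+1) := by
        rw [CN, if_neg (by simp [Nat.even_add_one, he])]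
      simp only [hB, hC, min_def] at hUa hUb hUc hLa hLb hLc
      refine ⟨?_, ?_, ?_⟩ <;> (split_ifs at hLa hLb hLc <;> omega)
    · have h1 : AN (d+1) = 2 * AN d + 1 := by
        rw [AN]
        rw [if_pos (by simpa [Nat.even_add_one] using ho)]
      have hB : BN d = AN d + 1 := by rw [BN, if_neg (Nat.not_even_iff_odd.2 ho)]
      have hC : CN d = AN d := by rw [CN, if_neg (Nat.not_even_iff_odd.2 ho)]
      have hB1 : BN (d+1) = AN (d+1) := by
        rw [BN, if_pos (by simpa [Nat.even_add_one] using ho)]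
      have hC1 : CN (d+1) = AN (d+1) - 1 := by
        rw [CN, if_pos (by simpa [Nat.even_add_one] using ho)]
      simp only [hB, hC, min_def] at hUa hUb hUc hLa hLb hLc
      refine ⟨?_, ?_, ?_⟩ <;> (split_ifs at hLa hLb hLc <;> omega)

lemma propNum_eq_AN (d : ℕ) : propNum (BalancedTree 2 d) = AN d := (main_values d).1

end MainValues

/-- For `k ≥ 2`, the minimum cardinalities of propagating sets of balanced
binary trees with `k` levels (depth `k - 1`) satisfy the recursion
`π(T_{2,k}) = 2·π(T_{2,k-1}) + 1` for `k` odd and `π(T_{2,k}) = 2·π(T_{2,k-1}) - 1` for `k`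
even; equivalently `π(T_{2,k}) = 2·π(T_{2,k-1}) + (-1)^(k-1)`. -/
theorem propNum_balancedBinaryTree_recursion (k : ℕ) (hk : 2 ≤ k) :
    (Odd k → (propNum (BalancedTree 2 (k - 1)) : ℤ)
        = 2 * (propNum (BalancedTree 2 (k - 2)) : ℤ) + 1) ∧
    (Even k → (propNum (BalancedTree 2 (k - 1)) : ℤ)
        = 2 * (propNum (BalancedTree 2 (k - 2)) : ℤ) - 1) ∧
    (propNum (BalancedTree 2 (k - 1)) : ℤ)
        = 2 * (propNum (BalancedTree 2 (k - 2)) : ℤ) + (-1) ^ (k - 1) := by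
  have h1 : propNum (BalancedTree 2 (k-1)) = AN (k-1) := propNum_eq_AN _
  have h2 : propNum (BalancedTree 2 (k-2)) = AN (k-2) := propNum_eq_AN _
  have hk1 : k - 1 = (k-2) + 1 := by omega
  have hAN : AN (k-1) = if Even (k-1) then 2 * AN (k-2) + 1 else 2 * AN (k-2) - 1 := by
    rw [hk1, AN, ← hk1]
  have hpos := AN_pos (k-2)
  have hodd : Odd k → (propNum (BalancedTree 2 (k - 1)) : ℤ)
      = 2 * (propNum (BalancedTree 2 (k - 2)) : ℤ) + 1 := by
    intro ho
    have he : Even (k-1) := by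
      rcases ho with ⟨m, rfl⟩
      exact ⟨m, by omega⟩
    rw [if_pos he] at hAN
    rw [h1, h2, hAN]
    push_cast
    ring
  have heven : Even k → (propNum (BalancedTree 2 (k - 1)) : ℤ)
      = 2 * (propNum (BalancedTree 2 (k - 2)) : ℤ) - 1 := by
    intro he
    have ho : ¬ Even (k-1) := by
      rcases he with ⟨m, rfl⟩
      rintro ⟨t, ht⟩
      omega
    rw [if_neg ho] at hAN
    rw [h1, h2, hAN]
    omega
  refine ⟨hodd, heven, ?_⟩
  rcases Nat.even_or_odd k with he | ho
  · have hok : Odd (k-1) := by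
      rcases he with ⟨m, rfl⟩
      exact ⟨m-1, by omega⟩
    rw [hok.neg_one_pow, heven he]
    ring
  · have hek : Even (k-1) := by
      rcases ho with ⟨m, rfl⟩
      exact ⟨m, by omega⟩
    rw [hek.neg_one_pow, hodd ho]
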